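/- A logic ⊢ has a unital matrix semantics if and only if for every formula φ(v, z⃗), the rule x, y, φ(x, z⃗) ⊢ φ(y, z⃗) is valid in ⊢. -/
import Mathlib


/-- An algebraic signature: a type of operation symbols with arities. -/
structure Sig : Type 1 where
  Op : Type
  ar : Op → ℕ

/-- Formulas (terms) over a signature, with variables indexed by ℕ. -/
inductive Fm (L : Sig) : Type where
  | var : ℕ → Fm L
  | op : (f : L.Op) → (Fin (L.ar f) → Fm L) → Fm L

/-- An algebra for the signature `L`. -/
structure Alg (L : Sig) : Type 1 where
  carrier : Type
  interp : (f : L.Op) → (Fin (L.ar f) → carrier) → carrier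

/-- Evaluation of a formula in an algebra under a valuation of the variables. -/
def Fm.eval {L : Sig} (A : Alg L) (v : ℕ → A.carrier) : Fm L → A.carrier
  | .var n => v n
  | .op f as => A.interp f (fun i => (as i).eval A v)

/-- Substitution (endomorphism of the formula algebra). -/
def Fm.subst {L : Sig} (σ : ℕ → Fm L) : Fm L → Fm L
  | .var n => σ n
  | .op f as => .op f (fun i => (as i).subst σ)

/-- The set of variables occurring in a formula. -/
def Fm.vars {L : Sig} : Fm L → Set ℕ
  | .var n => {n}
  | .op _ as => ⋃ i, (as i).vars

/-- Substitute the formula `ψ` for the variable `v` in `φ`. -/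
def Fm.subst1 {L : Sig} (v : ℕ) (ψ : Fm L) (φ : Fm L) : Fm L :=
  φ.subst (fun n => if n = v then ψ else .var n)

/-- A logic: a substitution-invariant (finitary or not) consequence relation on formulas. -/
structure Logic (L : Sig) : Type where
  deriv : Set (Fm L) → Fm L → Prop
  axm : ∀ Γ φ, φ ∈ Γ → deriv Γ φ
  mono : ∀ Γ Δ φ, Γ ⊆ Δ → deriv Γ φ → deriv Δ φ
  cut : ∀ Γ Δ φ, deriv Γ φ → (∀ γ ∈ Γ, deriv Δ γ) → deriv Δ φ
  substInv : ∀ (σ : ℕ → Fm L) Γ φ, deriv Γ φ → deriv (Fm.subst σ '' Γ) (φ.subst σ)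

/-- A logical matrix: an algebra with a set of designated elements. -/
structure LMatrix (L : Sig) : Type 1 where
  alg : Alg L
  F : Set alg.carrier

/-- The consequence relation induced by a class of matrices. -/
def inducedBy {L : Sig} (M : Set (LMatrix L)) (Γ : Set (Fm L)) (φ : Fm L) : Prop :=
  ∀ m ∈ M, ∀ v : ℕ → m.alg.carrier,
    (∀ γ ∈ Γ, γ.eval m.alg v ∈ m.F) → φ.eval m.alg v ∈ m.F

/-- `M` is a matrix semantics for the logic `ℒ`. -/
def IsMatrixSemantics {L : Sig} (ℒ : Logic L) (M : Set (LMatrix L)) : Prop :=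
  ∀ Γ φ, ℒ.deriv Γ φ ↔ inducedBy M Γ φ

/-- Equational consequence relative to a class of algebras (equations as pairs of formulas). -/
def eqConseq {L : Sig} (K : Set (Alg L)) (Θ : Set (Fm L × Fm L)) (e : Fm L × Fm L) : Prop :=
  ∀ A ∈ K, ∀ v : ℕ → A.carrier,
    (∀ p ∈ Θ, p.1.eval A v = p.2.eval A v) → e.1.eval A v = e.2.eval A v

/-- `τ(φ)`: the result of substituting `φ` for the variable `x` (= variable 0) in each
equation of `τ`. -/
def tauApp {L : Sig} (τ : Set (Fm L × Fm L)) (φ : Fm L) : Set (Fm L × Fm L) :=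
  (fun e => (Fm.subst1 0 φ e.1, Fm.subst1 0 φ e.2)) '' τ

/-- `τ[Γ]`. -/
def tauAppSet {L : Sig} (τ : Set (Fm L × Fm L)) (Γ : Set (Fm L)) : Set (Fm L × Fm L) :=
  ⋃ γ ∈ Γ, tauApp τ γ

/-- `τ` is a set of equations in the single variable `x` (= variable 0). -/
def IsUnivalent {L : Sig} (τ : Set (Fm L × Fm L)) : Prop :=
  ∀ e ∈ τ, e.1.vars ⊆ ({0} : Set ℕ) ∧ e.2.vars ⊆ ({0} : Set ℕ)

/-- `K` is a `τ`-algebraic semantics for `ℒ`: `Γ ⊢ φ` iff `τ[Γ] ⊨_K τ(φ)`. -/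
def IsTauAlgSem {L : Sig} (ℒ : Logic L) (τ : Set (Fm L × Fm L)) (K : Set (Alg L)) : Prop :=
  IsUnivalent τ ∧ ∀ Γ φ, ℒ.deriv Γ φ ↔ ∀ e ∈ tauApp τ φ, eqConseq K (tauAppSet τ Γ) e

/-- `ℒ` has an algebraic semantics (admits an equational completeness theorem). -/
def HasAlgSem {L : Sig} (ℒ : Logic L) : Prop :=
  ∃ (τ : Set (Fm L × Fm L)) (K : Set (Alg L)), IsTauAlgSem ℒ τ K

/-- `θ` is a congruence of the algebra `A`. -/
def IsCong {L : Sig} (A : Alg L) (θ : A.carrier → A.carrier → Prop) : Prop :=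
  Equivalence θ ∧ ∀ (f : L.Op) (as bs : Fin (L.ar f) → A.carrier),
    (∀ i, θ (as i) (bs i)) → θ (A.interp f as) (A.interp f bs)

/-- The congruence of `A` generated by `X` (least congruence containing `X`). -/
def congGen {L : Sig} (A : Alg L) (X : Set (A.carrier × A.carrier))
    (a c : A.carrier) : Prop :=
  ∀ θ, IsCong A θ → (∀ p ∈ X, θ p.1 p.2) → θ a c

/-- `p` is a unary polynomial function of `A`: `p(a) = φ^A(a, c⃗)` for a formula `φ(x, y⃗)`
and parameters `c⃗` from `A`. -/
def IsUnaryPoly {L : Sig} (A : Alg L) (p : A.carrier → A.carrier) : Prop :=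
  ∃ (φ : Fm L) (c : ℕ → A.carrier),
    ∀ a, p a = φ.eval A (fun n => if n = 0 then a else c n)

/-- Compatibility of a relation with a set. -/
def Compatible {L : Sig} (A : Alg L) (θ : A.carrier → A.carrier → Prop)
    (F : Set A.carrier) : Prop :=
  ∀ a c, θ a c → a ∈ F → c ∈ F

/-- The Leibniz congruence `Ω^A F`: the largest congruence of `A` compatible with `F`
(realized as the union of all congruences compatible with `F`). -/
def leibniz {L : Sig} (A : Alg L) (F : Set A.carrier) (a c : A.carrier) : Prop :=
  ∃ θ, IsCong A θ ∧ Compatible A θ F ∧ θ a c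

/-- The formula algebra. -/
def FmAlg (L : Sig) : Alg L :=
  ⟨Fm L, fun f as => Fm.op f as⟩

/-- `ℒ` has no theorems. -/
def LacksTheorems {L : Sig} (ℒ : Logic L) : Prop :=
  ¬ ∃ φ, ℒ.deriv ∅ φ

/-- `ℒ` is assertional. -/
def Assertional {L : Sig} (ℒ : Logic L) : Prop :=
  ∃ (M : Set (LMatrix L)) (φ : Fm L), IsMatrixSemantics ℒ M ∧ φ.vars ⊆ ({0} : Set ℕ) ∧
    ∀ m ∈ M, ∃ c : m.alg.carrier,
      (∀ a : m.alg.carrier, φ.eval m.alg (fun _ => a) = c) ∧ m.F = {c}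

/-- `ℒ` is almost assertional. -/
def AlmostAssertional {L : Sig} (ℒ : Logic L) : Prop :=
  LacksTheorems ℒ ∧
  ∃ (M : Set (LMatrix L)) (φ : Fm L), IsMatrixSemantics ℒ M ∧ φ.vars ⊆ ({0} : Set ℕ) ∧
    ∀ m ∈ M, m.F.Nonempty → ∃ c : m.alg.carrier,
      (∀ a : m.alg.carrier, φ.eval m.alg (fun _ => a) = c) ∧ m.F = {c}

/-- Two formulas are logically equivalent in `ℒ`. -/
def LogEquiv {L : Sig} (ℒ : Logic L) (ε δ : Fm L) : Prop :=
  ∀ (φ : Fm L) (v : ℕ),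
    ℒ.deriv {Fm.subst1 v ε φ} (Fm.subst1 v δ φ) ∧
    ℒ.deriv {Fm.subst1 v δ φ} (Fm.subst1 v ε φ)


/-! ### Auxiliary machinery -/

theorem Fm.subst_subst {L : Sig} (ρ τ : ℕ → Fm L) (ψ : Fm L) :
    (ψ.subst ρ).subst τ = ψ.subst (fun n => (ρ n).subst τ) := by
  induction ψ with
  | var n => rfl
  | op f as ih => exact congrArg _ (funext fun i => ih i)

theorem Fm.subst_var {L : Sig} (ψ : Fm L) : ψ.subst Fm.var = ψ := by
  induction ψ with
  | var n => rfl
  | op f as ih => exact congrArg _ (funext fun i => ih i)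

theorem Fm.eval_subst {L : Sig} (A : Alg L) (σ : ℕ → Fm L) (w : ℕ → A.carrier) (ψ : Fm L) :
    (ψ.subst σ).eval A w = ψ.eval A (fun n => (σ n).eval A w) := by
  induction ψ with
  | var n => rfl
  | op f as ih => exact congrArg _ (funext fun i => ih i)

/-- The Leibniz relation on formulas relative to a set `T`. -/
def leibT {L : Sig} (T : Set (Fm L)) (α β : Fm L) : Prop :=
  ∀ (ψ : Fm L) (σ : ℕ → Fm L),
    (ψ.subst (fun n => if n = 0 then α else σ n) ∈ T ↔
     ψ.subst (fun n => if n = 0 then β else σ n) ∈ T)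

def lsetoid {L : Sig} (T : Set (Fm L)) : Setoid (Fm L) :=
  ⟨leibT T, ⟨fun _ _ _ => Iff.rfl, fun h ψ σ => (h ψ σ).symm,
    fun h1 h2 ψ σ => (h1 ψ σ).trans (h2 ψ σ)⟩⟩

theorem leibT_mem_iff {L : Sig} {T : Set (Fm L)} {α β : Fm L} (h : leibT T α β) :
    α ∈ T ↔ β ∈ T := by
  have := h (Fm.var 0) (fun _ => Fm.var 0)
  simpa [Fm.subst] using this


def rho {L : Sig} (f : L.Op) (k : Fin (L.ar f)) : ℕ → Fm L := fun n =>
  if n = 0 then Fm.op f (fun i => if i = k then Fm.var 0 else Fm.var ((i : ℕ) + 1))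
  else Fm.var (n + L.ar f)

def kap {L : Sig} (f : L.Op) (c : Fin (L.ar f) → Fm L) (σ : ℕ → Fm L) : ℕ → Fm L :=
  fun m => if h : m - 1 < L.ar f then c ⟨m - 1, h⟩ else σ (m - L.ar f)

theorem key {L : Sig} (f : L.Op) (c : Fin (L.ar f) → Fm L) (k : Fin (L.ar f))
    (x ψ : Fm L) (σ : ℕ → Fm L) :
    ψ.subst (fun n => if n = 0 then Fm.op f (fun i => if i = k then x else c i) else σ n)
      = (ψ.subst (rho f k)).subst (fun n => if n = 0 then x else kap f c σ n) := by
  rw [Fm.subst_subst]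
  have : (fun n => if n = 0 then Fm.op f (fun i => if i = k then x else c i) else σ n)
      = (fun n => (rho f k n).subst (fun n => if n = 0 then x else kap f c σ n)) := by
    funext n
    by_cases hn : n = 0
    · subst hn
      simp only [rho, Fm.subst, reduceIte]
      refine congrArg _ (funext fun i => ?_)
      by_cases hik : i = k
      · simp [hik, Fm.subst]
      · have h1 : (i : ℕ) + 1 ≠ 0 := by omega
        have h2 : (i : ℕ) + 1 - 1 < L.ar f := by have := i.isLt; omega
        simp only [if_neg hik, Fm.subst, if_neg h1, kap, dif_pos h2]
        exact congrArg c (Fin.ext (by simp))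
    · have h1 : n + L.ar f ≠ 0 := by omega
      have h2 : ¬ (n + L.ar f - 1 < L.ar f) := by omega
      have h3 : n + L.ar f - L.ar f = n := by omega
      simp only [rho, if_neg hn, Fm.subst, if_neg h1, kap, dif_neg h2, h3]
  rw [this]

theorem leibT_op {L : Sig} {T : Set (Fm L)} (f : L.Op) (as bs : Fin (L.ar f) → Fm L)
    (h : ∀ i, leibT T (as i) (bs i)) : leibT T (Fm.op f as) (Fm.op f bs) := by
  intro ψ σ
  set mix : ℕ → Fin (L.ar f) → Fm L := fun k i => if (i : ℕ) < k then bs i else as i with hmix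
  have hchain : ∀ k : ℕ,
      (ψ.subst (fun n => if n = 0 then Fm.op f (mix k) else σ n) ∈ T ↔
       ψ.subst (fun n => if n = 0 then Fm.op f as else σ n) ∈ T) := by
    intro k
    induction k with
    | zero =>
      have e : mix 0 = as := funext fun i => if_neg (Nat.not_lt_zero _)
      rw [e]
    | succ k ih =>
      by_cases hk : k < L.ar f
      · have e1 : Fm.op f (mix k)
            = Fm.op f (fun i => if i = (⟨k, hk⟩ : Fin (L.ar f)) then as ⟨k, hk⟩ else mix k i) := by
          refine congrArg _ (funext fun i => ?_)
          by_cases hik : i = (⟨k, hk⟩ : Fin (L.ar f))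
          · rw [if_pos hik, hik]; simp [hmix]
          · rw [if_neg hik]
        have e2 : Fm.op f (mix (k + 1))
            = Fm.op f (fun i => if i = (⟨k, hk⟩ : Fin (L.ar f)) then bs ⟨k, hk⟩ else mix k i) := by
          refine congrArg _ (funext fun i => ?_)
          by_cases hik : i = (⟨k, hk⟩ : Fin (L.ar f))
          · rw [if_pos hik, hik]; simp [hmix]
          · have hv : (i : ℕ) ≠ k := fun hc => hik (Fin.ext hc)
            rw [if_neg hik]
            simp only [hmix]
            by_cases hlt : (i : ℕ) < k
            · rw [if_pos hlt, if_pos (by omega)]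
            · rw [if_neg hlt, if_neg (by omega)]
        rw [e2, key f (mix k) ⟨k, hk⟩ (bs ⟨k, hk⟩) ψ σ]
        refine Iff.trans (Iff.symm (h ⟨k, hk⟩ (ψ.subst (rho f ⟨k, hk⟩)) (kap f (mix k) σ))) ?_
        rw [← key f (mix k) ⟨k, hk⟩ (as ⟨k, hk⟩) ψ σ, ← e1]
        exact ih
      · have e : mix (k + 1) = mix k := by
          funext i
          have hi := i.isLt
          simp only [hmix]
          rw [if_pos (by omega), if_pos (by omega)]
        rw [e]; exact ih
  have hend : mix (L.ar f) = bs := funext fun i => if_pos i.isLt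
  rw [← hend]
  exact (hchain (L.ar f)).symm


theorem leibT_thy {L : Sig} (ℒ : Logic L)
    (hrule : ∀ (φ : Fm L) (v : ℕ),
      ℒ.deriv {Fm.var 0, Fm.var 1, Fm.subst1 v (Fm.var 0) φ} (Fm.subst1 v (Fm.var 1) φ))
    (Γ : Set (Fm L)) {α β : Fm L} (hα : ℒ.deriv Γ α) (hβ : ℒ.deriv Γ β) :
    leibT {x | ℒ.deriv Γ x} α β := by
  have main : ∀ (α β : Fm L), ℒ.deriv Γ α → ℒ.deriv Γ β → ∀ (ψ : Fm L) (σ : ℕ → Fm L),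
      ℒ.deriv Γ (ψ.subst (fun n => if n = 0 then α else σ n)) →
      ℒ.deriv Γ (ψ.subst (fun n => if n = 0 then β else σ n)) := by
    intro α β hα hβ ψ σ hmem
    have hr := hrule (ψ.subst (fun n => Fm.var (n + 2))) 2
    have hs := ℒ.substInv (fun m => if m = 0 then α else if m = 1 then β else σ (m - 2)) _ _ hr
    have e : ∀ t : Fm L,
        (Fm.subst1 2 t (ψ.subst (fun n => Fm.var (n + 2)))).subst
          (fun m => if m = 0 then α else if m = 1 then β else σ (m - 2))
        = ψ.subst (fun n => if n = 0 then
            t.subst (fun m => if m = 0 then α else if m = 1 then β else σ (m - 2)) else σ n) := by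
      intro t
      unfold Fm.subst1
      rw [Fm.subst_subst, Fm.subst_subst]
      refine congrFun (congrArg Fm.subst (funext fun n => ?_)) ψ
      by_cases hn : n = 0
      · subst hn
        simp only [Fm.subst, reduceIte]
      · have h1 : n + 2 ≠ 2 := by omega
        have h2 : n + 2 ≠ 0 := by omega
        have h3 : n + 2 ≠ 1 := by omega
        have h4 : n + 2 - 2 = n := by omega
        simp only [Fm.subst, if_neg h1, if_neg h2, if_neg h3, h4, if_neg hn]
    rw [e] at hs
    refine ℒ.cut _ Γ _ hs ?_
    rintro γ ⟨δ, hδ, rfl⟩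
    simp only [Set.mem_insert_iff, Set.mem_singleton_iff] at hδ
    rcases hδ with rfl | rfl | rfl
    · simpa [Fm.subst] using hα
    · simpa [Fm.subst] using hβ
    · rw [e]
      simpa [Fm.subst] using hmem
  intro ψ σ
  exact ⟨main α β hα hβ ψ σ, main β α hβ hα ψ σ⟩

/-- Quotient algebra by the Leibniz relation. -/
noncomputable def QAlg {L : Sig} (T : Set (Fm L)) : Alg L :=
  ⟨Quotient (lsetoid T),
   fun f as => Quotient.mk (lsetoid T) (Fm.op f (fun i => (as i).out))⟩

theorem QAlg_eval {L : Sig} (T : Set (Fm L)) (σ : ℕ → Fm L) (φ : Fm L) :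
    φ.eval (QAlg T) (fun n => Quotient.mk (lsetoid T) (σ n))
      = Quotient.mk (lsetoid T) (φ.subst σ) := by
  induction φ with
  | var n => rfl
  | op f as ih =>
    show (QAlg T).interp f (fun i => (as i).eval (QAlg T) (fun n => Quotient.mk (lsetoid T) (σ n))) = _
    have e : (fun i => (as i).eval (QAlg T) (fun n => Quotient.mk (lsetoid T) (σ n)))
        = fun i => Quotient.mk (lsetoid T) ((as i).subst σ) := funext ih
    rw [e]
    refine Quot.sound ?_
    exact leibT_op f _ _ (fun i => Quotient.exact (Quotient.out_eq (Quotient.mk (lsetoid T) ((as i).subst σ))))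

/-- A logic has a unital matrix semantics iff the rules `x, y, φ(x, z⃗) ⊢ φ(y, z⃗)` are
valid in it, for every formula `φ(v, z⃗)`. -/
theorem unital_matrix_semantics_iff {L : Sig} (ℒ : Logic L) :
    (∃ M : Set (LMatrix L), (∀ m ∈ M, m.F.Subsingleton) ∧ IsMatrixSemantics ℒ M) ↔
      ∀ (φ : Fm L) (v : ℕ),
        ℒ.deriv {Fm.var 0, Fm.var 1, Fm.subst1 v (Fm.var 0) φ}
          (Fm.subst1 v (Fm.var 1) φ) := by
  constructor
  · rintro ⟨M, hM, hsem⟩ φ v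
    rw [hsem]
    intro m hm w hws
    have h0 : w 0 ∈ m.F := hws (Fm.var 0) (by simp)
    have h1 : w 1 ∈ m.F := hws (Fm.var 1) (by simp)
    have h2 : (Fm.subst1 v (Fm.var 0) φ).eval m.alg w ∈ m.F :=
      hws _ (by simp)
    have hw01 : w 0 = w 1 := hM m hm h0 h1
    unfold Fm.subst1 at h2 ⊢
    rw [Fm.eval_subst] at h2 ⊢
    have e : (fun n => ((if n = v then Fm.var 1 else Fm.var n : Fm L)).eval m.alg w)
        = (fun n => ((if n = v then Fm.var 0 else Fm.var n : Fm L)).eval m.alg w) := by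
      funext n
      by_cases hn : n = v
      · simp only [if_pos hn, Fm.eval, hw01]
      · simp only [if_neg hn]
    rw [e]
    exact h2
  · intro hrule
    refine ⟨{ m : LMatrix L | ∃ Δ : Set (Fm L),
        m = ⟨QAlg {x | ℒ.deriv Δ x},
             Quotient.mk (lsetoid {x | ℒ.deriv Δ x}) '' {x | ℒ.deriv Δ x}⟩ }, ?_, ?_⟩
    · rintro m ⟨Δ, rfl⟩ a ⟨x, hx, rfl⟩ b ⟨y, hy, rfl⟩
      exact Quot.sound (leibT_thy ℒ hrule Δ hx hy)
    · intro Γ φ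
      constructor
      · rintro hd m ⟨Δ, rfl⟩ w hprem
        have hw : w = fun n => Quotient.mk (lsetoid {x | ℒ.deriv Δ x}) ((w n).out) :=
          funext fun n => (Quotient.out_eq (w n)).symm
        rw [hw] at hprem ⊢
        rw [QAlg_eval]
        refine ⟨φ.subst (fun n => (w n).out), ?_, rfl⟩
        refine ℒ.cut (Fm.subst (fun n => (w n).out) '' Γ) Δ _
          (ℒ.substInv (fun n => (w n).out) Γ φ hd) ?_
        rintro γ' ⟨γ, hγ, rfl⟩
        have := hprem γ hγ
        rw [QAlg_eval] at this
        obtain ⟨δ, hδ, heq⟩ := this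
        exact (leibT_mem_iff (Quotient.exact heq)).mp hδ
      · intro hind
        have hmem : (⟨QAlg {x | ℒ.deriv Γ x},
            Quotient.mk (lsetoid {x | ℒ.deriv Γ x}) '' {x | ℒ.deriv Γ x}⟩ : LMatrix L)
            ∈ { m : LMatrix L | ∃ Δ : Set (Fm L),
              m = ⟨QAlg {x | ℒ.deriv Δ x},
                   Quotient.mk (lsetoid {x | ℒ.deriv Δ x}) '' {x | ℒ.deriv Δ x}⟩ } := ⟨Γ, rfl⟩
        have := hind _ hmem (fun n => Quotient.mk (lsetoid {x | ℒ.deriv Γ x}) (Fm.var n)) ?_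
        · rw [QAlg_eval, Fm.subst_var] at this
          obtain ⟨δ, hδ, heq⟩ := this
          exact (leibT_mem_iff (Quotient.exact heq)).mp hδ
        · intro γ hγ
          rw [QAlg_eval, Fm.subst_var]
          exact ⟨γ, ℒ.axm Γ γ hγ, rfl⟩
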